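/- Let Σ_t and Σ_c be symmetric positive definite m×m real matrices. Then Σ_c − Σ_t is positive semidefinite if and only if for every r ≥ 0 the ellipsoid {x ∈ ℝ^m : xᵀ Σ_t^{-1} x ≤ r} is contained in the ellipsoid {x ∈ ℝ^m : xᵀ Σ_c^{-1} x ≤ r}. -/

import Mathlib

open Matrix

private lemma sym_dot {m : ℕ} {A : Matrix (Fin m) (Fin m) ℝ} (hA : A.IsHermitian)
    (u v : Fin m → ℝ) : v ⬝ᵥ A *ᵥ u = u ⬝ᵥ A *ᵥ v := by
  have hAT : Aᵀ = A := by simpa using congrArg id hA.eq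
  rw [dotProduct_mulVec, ← hAT, vecMul_transpose, hAT, dotProduct_comm]

/-- Cauchy–Schwarz for a PSD quadratic form. -/
private lemma cs_psd {m : ℕ} {A : Matrix (Fin m) (Fin m) ℝ} (hA : A.PosSemidef)
    (u v : Fin m → ℝ) :
    (v ⬝ᵥ A *ᵥ u) ^ 2 ≤ (v ⬝ᵥ A *ᵥ v) * (u ⬝ᵥ A *ᵥ u) := by
  have key : ∀ t : ℝ, 0 ≤ (u ⬝ᵥ A *ᵥ u) * (t * t) + (2 * (v ⬝ᵥ A *ᵥ u)) * t + (v ⬝ᵥ A *ᵥ v) := by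
    intro t
    have h0 := hA.dotProduct_mulVec_nonneg (v + t • u)
    simp only [star_trivial] at h0
    have expand : (v + t • u) ⬝ᵥ A *ᵥ (v + t • u)
        = (u ⬝ᵥ A *ᵥ u) * (t * t) + (2 * (v ⬝ᵥ A *ᵥ u)) * t + (v ⬝ᵥ A *ᵥ v) := by
      simp only [mulVec_add, mulVec_smul, dotProduct_add, add_dotProduct,
        dotProduct_smul, smul_dotProduct, smul_eq_mul]
      rw [sym_dot hA.1 v u]
      ring
    linarith [expand ▸ h0]
  have hd := discrim_le_zero key
  rw [discrim] at hd
  nlinarith [hd]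

/-- Antitonicity of inverse in Loewner order: quadratic form version. -/
private lemma inv_form_antitone {m : ℕ} {A B : Matrix (Fin m) (Fin m) ℝ}
    (hA : A.PosDef) (hB : B.PosDef) (h : (B - A).PosSemidef) (x : Fin m → ℝ) :
    x ⬝ᵥ B⁻¹ *ᵥ x ≤ x ⬝ᵥ A⁻¹ *ᵥ x := by
  set u := A⁻¹ *ᵥ x with hu
  set v := B⁻¹ *ᵥ x with hv
  have hAdet : IsUnit A.det := isUnit_iff_ne_zero.mpr hA.det_pos.ne'
  have hBdet : IsUnit B.det := isUnit_iff_ne_zero.mpr hB.det_pos.ne'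
  have hAu : A *ᵥ u = x := by
    rw [hu, mulVec_mulVec, Matrix.mul_nonsing_inv _ hAdet, one_mulVec]
  have hBv : B *ᵥ v = x := by
    rw [hv, mulVec_mulVec, Matrix.mul_nonsing_inv _ hBdet, one_mulVec]
  set a := x ⬝ᵥ A⁻¹ *ᵥ x with ha
  set c := x ⬝ᵥ B⁻¹ *ᵥ x with hc
  have huAu : u ⬝ᵥ A *ᵥ u = a := by rw [hAu, ha, hu, dotProduct_comm]
  have hvBv : v ⬝ᵥ B *ᵥ v = c := by rw [hBv, hc, hv, dotProduct_comm]
  have hvAu : v ⬝ᵥ A *ᵥ u = c := by rw [hAu, hc, hv, dotProduct_comm]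
  have hvAv : v ⬝ᵥ A *ᵥ v ≤ c := by
    have := h.dotProduct_mulVec_nonneg v
    simp only [star_trivial, sub_mulVec, dotProduct_sub] at this
    linarith [hvBv ▸ this]
  have hc0 : 0 ≤ c := by
    have := (hB.posSemidef.inv).dotProduct_mulVec_nonneg x
    simpa [star_trivial, ← hc] using this
  have ha0 : 0 ≤ a := by
    have := (hA.posSemidef.inv).dotProduct_mulVec_nonneg x
    simpa [star_trivial, ← ha] using this
  have hcs := cs_psd hA.posSemidef u v
  rw [hvAu, huAu] at hcs
  nlinarith [hcs, hvAv, hc0, ha0, hA.posSemidef.dotProduct_mulVec_nonneg u]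

theorem posSemidef_iff_ellipsoid_containment
    (m : ℕ) (St Sc : Matrix (Fin m) (Fin m) ℝ)
    (hSt : St.PosDef) (hSc : Sc.PosDef) :
    (Sc - St).PosSemidef ↔
      ∀ r : ℝ, 0 ≤ r →
        {x : Fin m → ℝ | x ⬝ᵥ St⁻¹.mulVec x ≤ r} ⊆
          {x : Fin m → ℝ | x ⬝ᵥ Sc⁻¹.mulVec x ≤ r} := by
  constructor
  · intro h r _ x hx
    exact le_trans (inv_form_antitone hSt hSc h x) hx
  · intro h
    have hform : ∀ x : Fin m → ℝ, x ⬝ᵥ Sc⁻¹ *ᵥ x ≤ x ⬝ᵥ St⁻¹ *ᵥ x := by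
      intro x
      have hr0 : 0 ≤ x ⬝ᵥ St⁻¹ *ᵥ x := by
        have := (hSt.posSemidef.inv).dotProduct_mulVec_nonneg x
        simpa [star_trivial] using this
      exact h _ hr0 (Set.mem_setOf_eq ▸ le_rfl)
    have hinv : (St⁻¹ - Sc⁻¹).PosSemidef := by
      refine PosSemidef.of_dotProduct_mulVec_nonneg ((hSt.posSemidef.inv.1).sub (hSc.posSemidef.inv.1)) fun x => ?_
      simp only [star_trivial, sub_mulVec, dotProduct_sub]
      linarith [hform x]
    have := inv_form_antitone hSc.inv hSt.inv hinv
    simp only [Matrix.nonsing_inv_nonsing_inv _ (isUnit_iff_ne_zero.mpr hSt.det_pos.ne'),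
      Matrix.nonsing_inv_nonsing_inv _ (isUnit_iff_ne_zero.mpr hSc.det_pos.ne')] at this
    exact PosSemidef.of_dotProduct_mulVec_nonneg (hSc.1.sub hSt.1) fun x => by
      simp only [star_trivial, sub_mulVec, dotProduct_sub]
      linarith [this x]
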